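/- Let Γ be a finite simplicial graph, A_Γ the associated right-angled Artin group, v, w ∈ Γ non-adjacent vertices, A a union of connected components of Γ ∖ st(v) and B a union of connected components of Γ ∖ st(w). Then the partial conjugations c_A^v and c_B^w commute in Aut(A_Γ) if and only if one of the following holds: (i) A ∩ B = ∅, v ∉ B, and w ∉ A; (ii) A ⊆ B and v ∈ B; (iii) B ⊆ A and w ∈ A. -/

import Mathlib

/-!
STATEMENT 7: For a RAAG `A_Γ`, non-adjacent vertices `v, w`, and unions `A`, `B` of
connected components of `Γ ∖ st(v)`, `Γ ∖ st(w)` respectively, the partial conjugations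
`c_A^v` and `c_B^w` commute iff (i) `A ∩ B = ∅`, `v ∉ B`, `w ∉ A`; or (ii) `A ⊆ B`, `v ∈ B`;
or (iii) `B ⊆ A`, `w ∈ A`.
-/

/-- The defining relators of the right-angled Artin group of a graph. -/
def raagRels {V : Type*} (Γ : SimpleGraph V) : Set (FreeGroup V) :=
  {r | ∃ u v : V, Γ.Adj u v ∧
    r = FreeGroup.of u * FreeGroup.of v * (FreeGroup.of u)⁻¹ * (FreeGroup.of v)⁻¹}

/-- The right-angled Artin group on a graph `Γ`. -/
abbrev RAAG {V : Type*} (Γ : SimpleGraph V) : Type _ := PresentedGroup (raagRels Γ)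

/-- The standard generator of `RAAG Γ` corresponding to a vertex. -/
def raagGen {V : Type*} (Γ : SimpleGraph V) (v : V) : RAAG Γ := PresentedGroup.of v

/-- The star of a vertex: the vertex together with its neighbours. -/
def graphStar {V : Type*} (Γ : SimpleGraph V) (v : V) : Set V :=
  insert v (Γ.neighborSet v)

/-- The connected component (as a set of vertices of `V`) of the vertex `u` in the induced
subgraph of `Γ` on the set `s`. -/
def compIn {V : Type*} (Γ : SimpleGraph V) (s : Set V) (u : V) : Set V :=
  {x | ∃ (hu : u ∈ s) (hx : x ∈ s), (Γ.induce s).Reachable ⟨u, hu⟩ ⟨x, hx⟩}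

/-- `A` is a union of connected components of `Γ ∖ st(v)`. -/
def IsUnionOfComponents {V : Type*} (Γ : SimpleGraph V) (v : V) (A : Set V) : Prop :=
  A ⊆ (graphStar Γ v)ᶜ ∧ ∀ u ∈ A, compIn Γ (graphStar Γ v)ᶜ u ⊆ A

open Classical in
/-- `φ` is the partial conjugation by the vertex `v` based at the set `A`: it sends each
standard generator `u ∈ A` to `v⁻¹ u v` and fixes all other standard generators. -/
noncomputable def IsPartialConj {V : Type*} (Γ : SimpleGraph V)
    (φ : MulAut (RAAG Γ)) (v : V) (A : Set V) : Prop :=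
  ∀ u : V, φ (raagGen Γ u) =
    if u ∈ A then (raagGen Γ v)⁻¹ * raagGen Γ u * raagGen Γ v else raagGen Γ u

/-- Auxiliary: a vertex-labelling with commuting images of adjacent vertices induces a
homomorphism out of the RAAG. -/
lemma raag_hom_aux {V : Type*} (Γ : SimpleGraph V) {G : Type*} [Group G] (f : V → G)
    (h : ∀ a b, Γ.Adj a b → Commute (f a) (f b)) :
    ∃ π : RAAG Γ →* G, ∀ u, π (raagGen Γ u) = f u := by
  have hr : ∀ r ∈ raagRels Γ, FreeGroup.lift f r = 1 := by
    rintro r ⟨a, b, hab, rfl⟩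
    have hc := (h a b hab).eq
    simp only [map_mul, map_inv, FreeGroup.lift_apply_of]
    rw [hc]; group
  exact ⟨PresentedGroup.toGroup hr, fun u => PresentedGroup.toGroup.of hr⟩

lemma key_sub_aux {V : Type*} (Γ : SimpleGraph V) (v w : V) (hadj : ¬ Γ.Adj v w)
    (A B : Set V) (hA : IsUnionOfComponents Γ v A) (hB : IsUnionOfComponents Γ w B)
    (φ ψ : MulAut (RAAG Γ)) (hφ : IsPartialConj Γ φ v A) (hψ : IsPartialConj Γ ψ w B)
    (hc : ∀ g : RAAG Γ, φ (ψ g) = ψ (φ g)) (hvB : v ∈ B) : A ⊆ B := by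
  classical
  have hφ' : ∀ t, φ (raagGen Γ t) =
      if t ∈ A then (raagGen Γ v)⁻¹ * raagGen Γ t * raagGen Γ v else raagGen Γ t := hφ
  have hψ' : ∀ t, ψ (raagGen Γ t) =
      if t ∈ B then (raagGen Γ w)⁻¹ * raagGen Γ t * raagGen Γ w else raagGen Γ t := hψ
  intro u huA
  by_contra huB
  have hvA : v ∉ A := fun h => hA.1 h (Set.mem_insert _ _)
  have hwB : w ∉ B := fun h => hB.1 h (Set.mem_insert _ _)
  have huv : u ≠ v := fun h => hvA (h ▸ huA)
  have hwv : w ≠ v := fun h => hwB (h ▸ hvB)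
  have hadj_vu : ¬ Γ.Adj v u := fun h => hA.1 huA (Set.mem_insert_iff.mpr (Or.inr h))
  have E := hc (raagGen Γ u)
  rw [hψ' u, if_neg huB, hφ' u, if_pos huA] at E
  simp only [map_mul, map_inv] at E
  rw [hψ' v, if_pos hvB, hψ' u, if_neg huB] at E
  set f : V → FreeGroup (Fin 3) := fun t =>
    if t = v then FreeGroup.of 0 else if t = w ∨ t = u then FreeGroup.of 1 else 1 with hf
  obtain ⟨π, hπ⟩ := raag_hom_aux Γ f (by
    intro a b hab
    by_cases ha : a = v ∨ (a = w ∨ a = u)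
    · by_cases hb : b = v ∨ (b = w ∨ b = u)
      · -- both special: every pair is adjacent-forbidden or equal values
        rcases ha with rfl | ha <;> rcases hb with rfl | hb
        · exact absurd hab (Γ.loopless.irrefl _)
        · exfalso
          rcases hb with rfl | rfl
          · exact hadj hab
          · exact hadj_vu hab
        · exfalso
          rcases ha with rfl | rfl
          · exact hadj hab.symm
          · exact hadj_vu hab.symm
        · -- both map to of 1
          have hav : a ≠ v := by
            rintro rfl
            rcases ha with h | h
            · exact hwv h.symm
            · exact huv h.symm
          have hbv : b ≠ v := by
            rintro rfl
            rcases hb with h | h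
            · exact hwv h.symm
            · exact huv h.symm
          simp only [hf, if_neg hav, if_neg hbv, if_pos ha, if_pos hb]
          exact Commute.refl _
      · rw [not_or] at hb
        simp only [hf, if_neg hb.1, if_neg hb.2]
        exact Commute.one_right _
    · rw [not_or] at ha
      simp only [hf, if_neg ha.1, if_neg ha.2]
      exact Commute.one_left _)
  have fv : f v = FreeGroup.of 0 := by simp [hf]
  have fw : f w = FreeGroup.of 1 := by simp [hf, hwv]
  have fu : f u = FreeGroup.of 1 := by simp [hf, huv]
  have E2 := congrArg π E
  simp only [map_mul, map_inv, hπ, fv, fw, fu] at E2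
  exact absurd E2 (by decide)

lemma key_disj_aux {V : Type*} (Γ : SimpleGraph V) (v w : V) (hvw : v ≠ w)
    (hadj : ¬ Γ.Adj v w)
    (A B : Set V) (hA : IsUnionOfComponents Γ v A) (hB : IsUnionOfComponents Γ w B)
    (φ ψ : MulAut (RAAG Γ)) (hφ : IsPartialConj Γ φ v A) (hψ : IsPartialConj Γ ψ w B)
    (hc : ∀ g : RAAG Γ, φ (ψ g) = ψ (φ g)) (hvB : v ∉ B) (hwA : w ∉ A) : A ∩ B = ∅ := by
  classical
  have hφ' : ∀ t, φ (raagGen Γ t) =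
      if t ∈ A then (raagGen Γ v)⁻¹ * raagGen Γ t * raagGen Γ v else raagGen Γ t := hφ
  have hψ' : ∀ t, ψ (raagGen Γ t) =
      if t ∈ B then (raagGen Γ w)⁻¹ * raagGen Γ t * raagGen Γ w else raagGen Γ t := hψ
  rw [Set.eq_empty_iff_forall_notMem]
  rintro u ⟨huA, huB⟩
  have hvA : v ∉ A := fun h => hA.1 h (Set.mem_insert _ _)
  have hwB : w ∉ B := fun h => hB.1 h (Set.mem_insert _ _)
  have huv : u ≠ v := fun h => hvA (h ▸ huA)
  have huw : u ≠ w := fun h => hwB (h ▸ huB)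
  have hwv : w ≠ v := fun h => hvw h.symm
  have hadj_vu : ¬ Γ.Adj v u := fun h => hA.1 huA (Set.mem_insert_iff.mpr (Or.inr h))
  have hadj_wu : ¬ Γ.Adj w u := fun h => hB.1 huB (Set.mem_insert_iff.mpr (Or.inr h))
  have E := hc (raagGen Γ u)
  rw [hψ' u, if_pos huB, hφ' u, if_pos huA] at E
  simp only [map_mul, map_inv] at E
  rw [hφ' u, if_pos huA, hφ' w, if_neg hwA, hψ' u, if_pos huB, hψ' v, if_neg hvB] at E
  set f : V → FreeGroup (Fin 3) := fun t =>
    if t = v then FreeGroup.of 0 else if t = w then FreeGroup.of 1 else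
      if t = u then FreeGroup.of 2 else 1 with hf
  obtain ⟨π, hπ⟩ := raag_hom_aux Γ f (by
    intro a b hab
    by_cases ha : a = v ∨ a = w ∨ a = u
    · by_cases hb : b = v ∨ b = w ∨ b = u
      · exfalso
        rcases ha with rfl | rfl | rfl <;> rcases hb with rfl | rfl | rfl
        exacts [Γ.loopless.irrefl _ hab, hadj hab, hadj_vu hab, hadj hab.symm,
          Γ.loopless.irrefl _ hab, hadj_wu hab, hadj_vu hab.symm, hadj_wu hab.symm,
          Γ.loopless.irrefl _ hab]
      · push_neg at hb
        simp only [hf, if_neg hb.1, if_neg hb.2.1, if_neg hb.2.2]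
        exact Commute.one_right _
    · push_neg at ha
      simp only [hf, if_neg ha.1, if_neg ha.2.1, if_neg ha.2.2]
      exact Commute.one_left _)
  have fv : f v = FreeGroup.of 0 := by simp [hf]
  have fw : f w = FreeGroup.of 1 := by simp [hf, hwv]
  have fu : f u = FreeGroup.of 2 := by simp [hf, huv, huw]
  have E2 := congrArg π E
  simp only [map_mul, map_inv, hπ, fv, fw, fu] at E2
  exact absurd E2 (by decide)

theorem partialConj_commute_iff {V : Type*} [Fintype V] (Γ : SimpleGraph V)
    (v w : V) (hvw : v ≠ w) (hadj : ¬ Γ.Adj v w)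
    (A B : Set V) (hA : IsUnionOfComponents Γ v A) (hB : IsUnionOfComponents Γ w B)
    (φ ψ : MulAut (RAAG Γ)) (hφ : IsPartialConj Γ φ v A) (hψ : IsPartialConj Γ ψ w B) :
    Commute φ ψ ↔
      (A ∩ B = ∅ ∧ v ∉ B ∧ w ∉ A) ∨ (A ⊆ B ∧ v ∈ B) ∨ (B ⊆ A ∧ w ∈ A) := by
  classical
  have hφ' : ∀ t, φ (raagGen Γ t) =
      if t ∈ A then (raagGen Γ v)⁻¹ * raagGen Γ t * raagGen Γ v else raagGen Γ t := hφ
  have hψ' : ∀ t, ψ (raagGen Γ t) =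
      if t ∈ B then (raagGen Γ w)⁻¹ * raagGen Γ t * raagGen Γ w else raagGen Γ t := hψ
  have hvA : v ∉ A := fun h => hA.1 h (Set.mem_insert _ _)
  have hwB : w ∉ B := fun h => hB.1 h (Set.mem_insert _ _)
  constructor
  · intro hcomm
    have hmul : φ * ψ = ψ * φ := hcomm
    have hc : ∀ g : RAAG Γ, φ (ψ g) = ψ (φ g) := fun g => by
      have h := DFunLike.congr_fun hmul g
      simpa [MulAut.mul_apply] using h
    by_cases hvB : v ∈ B <;> by_cases hwA : w ∈ A
    · have h1 : A ⊆ B := key_sub_aux Γ v w hadj A B hA hB φ ψ hφ hψ hc hvB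
      have h2 : B ⊆ A := key_sub_aux Γ w v (fun h => hadj h.symm) B A hB hA ψ φ hψ hφ
        (fun g => (hc g).symm) hwA
      exact absurd (h2 hvB) hvA
    · exact Or.inr (Or.inl ⟨key_sub_aux Γ v w hadj A B hA hB φ ψ hφ hψ hc hvB, hvB⟩)
    · exact Or.inr (Or.inr ⟨key_sub_aux Γ w v (fun h => hadj h.symm) B A hB hA ψ φ hψ hφ
        (fun g => (hc g).symm) hwA, hwA⟩)
    · exact Or.inl ⟨key_disj_aux Γ v w hvw hadj A B hA hB φ ψ hφ hψ hc hvB hwA, hvB, hwA⟩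
  · intro hcond
    have key : ∀ x : V, φ (ψ (raagGen Γ x)) = ψ (φ (raagGen Γ x)) := by
      rcases hcond with ⟨hAB, hvB, hwA⟩ | ⟨hsub, hvB⟩ | ⟨hsub, hwA⟩
      · intro x
        by_cases hxA : x ∈ A <;> by_cases hxB : x ∈ B
        · exact absurd (Set.eq_empty_iff_forall_notMem.mp hAB x ⟨hxA, hxB⟩) (fun h => h)
        · rw [hψ' x, if_neg hxB, hφ' x, if_pos hxA]
          simp only [map_mul, map_inv]
          rw [hψ' v, if_neg hvB, hψ' x, if_neg hxB]
        · rw [hψ' x, if_pos hxB, hφ' x, if_neg hxA]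
          simp only [map_mul, map_inv]
          rw [hφ' w, if_neg hwA, hφ' x, if_neg hxA, hψ' x, if_pos hxB]
        · rw [hψ' x, if_neg hxB, hφ' x, if_neg hxA, hψ' x, if_neg hxB]
      · have hwA : w ∉ A := fun h => hwB (hsub h)
        intro x
        by_cases hxA : x ∈ A <;> by_cases hxB : x ∈ B
        · rw [hψ' x, if_pos hxB, hφ' x, if_pos hxA]
          simp only [map_mul, map_inv]
          rw [hφ' w, if_neg hwA, hφ' x, if_pos hxA, hψ' v, if_pos hvB, hψ' x, if_pos hxB]
          group
        · exact absurd (hsub hxA) hxB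
        · rw [hψ' x, if_pos hxB, hφ' x, if_neg hxA]
          simp only [map_mul, map_inv]
          rw [hφ' w, if_neg hwA, hφ' x, if_neg hxA, hψ' x, if_pos hxB]
        · rw [hψ' x, if_neg hxB, hφ' x, if_neg hxA, hψ' x, if_neg hxB]
      · have hvB : v ∉ B := fun h => hvA (hsub h)
        intro x
        by_cases hxA : x ∈ A <;> by_cases hxB : x ∈ B
        · rw [hψ' x, if_pos hxB, hφ' x, if_pos hxA]
          simp only [map_mul, map_inv]
          rw [hφ' w, if_pos hwA, hφ' x, if_pos hxA, hψ' v, if_neg hvB, hψ' x, if_pos hxB]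
          group
        · rw [hψ' x, if_neg hxB, hφ' x, if_pos hxA]
          simp only [map_mul, map_inv]
          rw [hψ' v, if_neg hvB, hψ' x, if_neg hxB]
        · exact absurd (hsub hxB) hxA
        · rw [hψ' x, if_neg hxB, hφ' x, if_neg hxA, hψ' x, if_neg hxB]
    show φ * ψ = ψ * φ
    refine MulEquiv.toMonoidHom_injective (PresentedGroup.ext fun x => ?_)
    simpa [MulAut.mul_apply, raagGen] using key x
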